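/- Let p be a polynomial of degree at most 4, let Δx > 0, let x_{j+1/2} = x_a + j·Δx for integers j, and set û_j = (1/Δx)∫_{x_{j-1/2}}^{x_{j+1/2}} p(x) dx. Then for every j, (2û_{j-2} − 13û_{j-1} + 47û_j + 27û_{j+1} − 3û_{j+2})/60 = p(x_{j+1/2}). -/

import Mathlib

theorem mp5_linear_reconstruction_exact (p : Polynomial ℝ) (hp : p.natDegree ≤ 4)
    (Δx xa : ℝ) (hΔx : 0 < Δx)
    -- `xh j` is the interface location x_{j+1/2} = xa + j·Δx
    (xh : ℤ → ℝ) (hxh : ∀ j : ℤ, xh j = xa + j * Δx)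
    -- `u j` is the cell average of p over cell I_j = [x_{j-1/2}, x_{j+1/2}]
    (u : ℤ → ℝ) (hu : ∀ j : ℤ, u j = (1/Δx) * ∫ x in (xh (j-1))..(xh j), p.eval x) :
    ∀ j : ℤ,
      (2 * u (j-2) - 13 * u (j-1) + 47 * u j + 27 * u (j+1) - 3 * u (j+2)) / 60
        = p.eval (xh j) := by
  intro j
  set a0 := p.coeff 0; set a1 := p.coeff 1; set a2 := p.coeff 2
  set a3 := p.coeff 3; set a4 := p.coeff 4
  have hev : ∀ x : ℝ, p.eval x = a0 + a1*x^1 + a2*x^2 + a3*x^3 + a4*x^4 := by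
    intro x
    rw [Polynomial.eval_eq_sum_range' (Nat.lt_succ_of_le hp) x]
    simp [Finset.sum_range_succ]
    rfl
  have hint : ∀ a b : ℝ, (∫ x in a..b, p.eval x) =
      a0*(b-a) + a1*(b^2-a^2)/2 + a2*(b^3-a^3)/3 + a3*(b^4-a^4)/4 + a4*(b^5-a^5)/5 := by
    intro a b
    have : (∫ x in a..b, p.eval x)
        = ∫ x in a..b, (a0 + a1*x^1 + a2*x^2 + a3*x^3 + a4*x^4) := by
      apply intervalIntegral.integral_congr; intro x _; exact hev x
    rw [this]
    have I : ∀ (c : ℝ) (n : ℕ), IntervalIntegrable (fun x : ℝ => c * x ^ n) MeasureTheory.volume a b := by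
      intro c n
      exact (intervalIntegral.intervalIntegrable_pow n).const_mul c
    have I0 : IntervalIntegrable (fun _ : ℝ => a0) MeasureTheory.volume a b := intervalIntegrable_const
    have I1 := I a1 1
    have I2 := I a2 2
    have I3 := I a3 3
    have I4 := I a4 4
    rw [intervalIntegral.integral_add (((I0.add (by simpa using I1)).add I2).add I3) I4,
        intervalIntegral.integral_add ((I0.add (by simpa using I1)).add I2) I3,
        intervalIntegral.integral_add (I0.add (by simpa using I1)) I2,
        intervalIntegral.integral_add I0 (by simpa using I1)]
    simp only [intervalIntegral.integral_const_mul, integral_pow,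
      intervalIntegral.integral_const, smul_eq_mul]
    push_cast
    ring
  have h2 := hu (j-2); have h1 := hu (j-1); have h0 := hu j
  have hp1 := hu (j+1); have hp2 := hu (j+2)
  rw [hint] at h2 h1 h0 hp1 hp2
  rw [h2, h1, h0, hp1, hp2, hev]
  rw [hxh (j-2-1), hxh (j-2), hxh (j-1-1), hxh (j-1), hxh j, hxh (j+1-1), hxh (j+1),
      hxh (j+2-1), hxh (j+2)]
  push_cast
  field_simp
  ring
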